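/- Let σ* be a positive definite hermitian n×n matrix and φ a hermitian n×n matrix. Then L_{σ*}⁻¹(φ) commutes with σ* if and only if φ commutes with σ*. -/

import Mathlib

open Matrix
open scoped ComplexOrder

/-- The old Mathlib `Matrix.PosSemidef.sqrt` (removed from Mathlib), with its old definition. -/
noncomputable def Matrix.PosSemidef.sqrt {n 𝕜 : Type*} [Fintype n] [DecidableEq n] [RCLike 𝕜]
    {A : Matrix n n 𝕜} (hA : A.PosSemidef) : Matrix n n 𝕜 :=
  (hA.1.eigenvectorUnitary : Matrix n n 𝕜) *
    diagonal ((↑) ∘ (√·) ∘ hA.1.eigenvalues) * (star hA.1.eigenvectorUnitary : Matrix n n 𝕜)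

noncomputable def traceNorm {ι : Type*} [Fintype ι] [DecidableEq ι]
    (A : Matrix ι ι ℂ) : ℝ :=
  ((Matrix.posSemidef_conjTranspose_mul_self A).sqrt.trace).re

noncomputable def mfun {ι : Type*} [Fintype ι] [DecidableEq ι] (g : ℝ → ℝ)
    (A : Matrix ι ι ℂ) : Matrix ι ι ℂ :=
  if hA : A.IsHermitian then
    (hA.eigenvectorUnitary : Matrix ι ι ℂ) *
      Matrix.diagonal (fun i => (g (hA.eigenvalues i) : ℂ)) *
      (star hA.eigenvectorUnitary : Matrix ι ι ℂ)
  else 0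

noncomputable def divDiff {ι : Type*} (g : ℝ → ℝ) (a : ι → ℝ) : Matrix ι ι ℝ :=
  Matrix.of fun i j =>
    if a i = a j then deriv g (a i) else (g (a i) - g (a j)) / (a i - a j)

noncomputable def Dop {ι : Type*} [Fintype ι] [DecidableEq ι] (g : ℝ → ℝ)
    {A : Matrix ι ι ℂ} (hA : A.IsHermitian) (B : Matrix ι ι ℂ) : Matrix ι ι ℂ :=
  (hA.eigenvectorUnitary : Matrix ι ι ℂ) *
    (((divDiff g hA.eigenvalues).map Complex.ofReal) ⊙
      ((star hA.eigenvectorUnitary : Matrix ι ι ℂ) * B *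
        (hA.eigenvectorUnitary : Matrix ι ι ℂ))) *
    (star hA.eigenvectorUnitary : Matrix ι ι ℂ)

noncomputable def relEnt {ι : Type*} [Fintype ι] [DecidableEq ι]
    (ρ σ : Matrix ι ι ℂ) : ℝ :=
  ((ρ * (mfun Real.log ρ - mfun Real.log σ)).trace).re

def ptrans {m n : Type*} (A : Matrix (m × n) (m × n) ℂ) : Matrix (m × n) (m × n) ℂ :=
  Matrix.of fun p q => A (p.1, q.2) (q.1, p.2)

noncomputable def divDiffInv {ι : Type*} (g : ℝ → ℝ) (a : ι → ℝ) : Matrix ι ι ℝ :=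
  Matrix.of fun i j =>
    if a i = a j then 1 / deriv g (a i) else (a i - a j) / (g (a i) - g (a j))

noncomputable def Dinv {ι : Type*} [Fintype ι] [DecidableEq ι] (g : ℝ → ℝ)
    {A : Matrix ι ι ℂ} (hA : A.IsHermitian) (B : Matrix ι ι ℂ) : Matrix ι ι ℂ :=
  (hA.eigenvectorUnitary : Matrix ι ι ℂ) *
    (((divDiffInv g hA.eigenvalues).map Complex.ofReal) ⊙
      ((star hA.eigenvectorUnitary : Matrix ι ι ℂ) * B *
        (hA.eigenvectorUnitary : Matrix ι ι ℂ))) *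
    (star hA.eigenvectorUnitary : Matrix ι ι ℂ)

lemma commute_diagonal_iff' {n : Type*} [Fintype n] [DecidableEq n]
    (B : Matrix n n ℂ) (d : n → ℂ) :
    Commute B (Matrix.diagonal d) ↔ ∀ i j, d i ≠ d j → B i j = 0 := by
  constructor
  · intro h i j hne
    have h1 : (B * Matrix.diagonal d) i j = (Matrix.diagonal d * B) i j := by rw [h.eq]
    rw [Matrix.mul_diagonal, Matrix.diagonal_mul] at h1
    have h2 : (d j - d i) * B i j = 0 := by linear_combination h1
    rcases mul_eq_zero.mp h2 with h3 | h3
    · exact absurd (sub_eq_zero.mp h3).symm hne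
    · exact h3
  · intro h
    ext i j
    rw [Matrix.mul_diagonal, Matrix.diagonal_mul]
    by_cases hd : d i = d j
    · rw [hd]; ring
    · rw [h i j hd]; ring

lemma commute_conj_iff {n : Type*} [Fintype n] [DecidableEq n]
    (U X Y : Matrix n n ℂ) (hU1 : star U * U = 1) (hU2 : U * star U = 1) :
    Commute (U * X * star U) (U * Y * star U) ↔ Commute X Y := by
  constructor
  · intro h
    have := h.eq
    have h2 : star U * (U * X * star U * (U * Y * star U)) * U
        = star U * (U * Y * star U * (U * X * star U)) * U := by rw [this]
    unfold Commute SemiconjBy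
    calc X * Y = (star U * U) * X * (star U * U) * Y * (star U * U) := by
          rw [hU1]; noncomm_ring
      _ = star U * (U * X * star U * (U * Y * star U)) * U := by noncomm_ring
      _ = star U * (U * Y * star U * (U * X * star U)) * U := h2
      _ = (star U * U) * Y * (star U * U) * X * (star U * U) := by noncomm_ring
      _ = Y * X := by rw [hU1]; noncomm_ring
  · intro h
    unfold Commute SemiconjBy
    calc U * X * star U * (U * Y * star U) = U * (X * (star U * U) * Y) * star U := by
          noncomm_ring
      _ = U * (Y * (star U * U) * X) * star U := by rw [hU1, mul_one, mul_one, h.eq]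
      _ = U * Y * star U * (U * X * star U) := by noncomm_ring

theorem Linv_commute_iff_commute
    {N : ℕ} (σs φ : Matrix (Fin N) (Fin N) ℂ) (hσs : σs.PosDef)
    (hφ : φ.IsHermitian) :
    Commute (Dinv Real.log hσs.1 φ) σs ↔ Commute φ σs := by
  set U : Matrix (Fin N) (Fin N) ℂ := (hσs.1.eigenvectorUnitary : Matrix (Fin N) (Fin N) ℂ)
    with hUdef
  have hU2 : U * star U = 1 := Matrix.mem_unitaryGroup_iff.mp hσs.1.eigenvectorUnitary.2
  have hU1 : star U * U = 1 := Matrix.mem_unitaryGroup_iff'.mp hσs.1.eigenvectorUnitary.2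
  set a := hσs.1.eigenvalues with hadef
  have hpos : ∀ i, 0 < a i := hσs.eigenvalues_pos
  set d : Fin N → ℂ := RCLike.ofReal ∘ a with hddef
  set M : Matrix (Fin N) (Fin N) ℂ := star U * φ * U with hMdef
  have hφeq : φ = U * M * star U := by
    rw [hMdef]
    calc φ = (U * star U) * φ * (U * star U) := by rw [hU2, one_mul, mul_one]
      _ = U * (star U * φ * U) * star U := by noncomm_ring
  have hσeq : σs = U * Matrix.diagonal d * star U := hσs.1.spectral_theorem
  have hS : ∀ i j : Fin N, d i ≠ d j →
      ((divDiffInv Real.log a).map Complex.ofReal) i j ≠ 0 := by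
    intro i j hdne
    have hane : a i ≠ a j := by
      intro h; exact hdne (by simp [hddef, Function.comp, h])
    have hlogne : Real.log (a i) ≠ Real.log (a j) :=
      Real.log_injOn_pos.ne (Set.mem_Ioi.mpr (hpos i)) (Set.mem_Ioi.mpr (hpos j)) hane
    simp only [divDiffInv, Matrix.map_apply, Matrix.of_apply, if_neg hane]
    exact_mod_cast Complex.ofReal_ne_zero.mpr
      (div_ne_zero (sub_ne_zero.mpr hane) (sub_ne_zero.mpr hlogne))
  have key : Commute (((divDiffInv Real.log a).map Complex.ofReal) ⊙ M) (Matrix.diagonal d)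
      ↔ Commute M (Matrix.diagonal d) := by
    rw [commute_diagonal_iff', commute_diagonal_iff']
    constructor
    · intro h i j hne
      have := h i j hne
      rw [Matrix.hadamard_apply] at this
      exact (mul_eq_zero.mp this).resolve_left (hS i j hne)
    · intro h i j hne
      rw [Matrix.hadamard_apply, h i j hne, mul_zero]
  have hDinv : Dinv Real.log hσs.1 φ
      = U * (((divDiffInv Real.log a).map Complex.ofReal) ⊙ M) * star U := rfl
  rw [hDinv]
  conv_lhs => rw [hσeq]
  rw [commute_conj_iff _ _ _ hU1 hU2, key, ← commute_conj_iff U M (Matrix.diagonal d) hU1 hU2,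
    ← hφeq, ← hσeq]
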